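/- Let h ≥ 1 and let P be the probability distribution on prices in [1,h] with cumulative distribution function P(z) = (1 + ln z)/(1 + ln h) for z ∈ [1,h] (which includes a point mass of 1/(1 + ln h) at 1). Then for every buyer value v ∈ [1,h], the expected revenue from posting a random price drawn from P (where a price p yields revenue p if p ≤ v, and 0 otherwise) equals v/(1 + ln h). -/

import Mathlib

open MeasureTheory intervalIntegral

/-- Monopoly pricing: expected revenue of the random price with CDF
`(1 + log z)/(1 + log h)` on `[1,h]` (point mass `1/(1+log h)` at `1`,
continuous density `1/(z (1 + log h))` on `[1,h]`) at a buyer value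
`v ∈ [1,h]` equals `v/(1 + log h)`.  A price `p` yields revenue `p` iff
`p ≤ v`, so prices in `(v, h]` contribute nothing. -/
theorem monopoly_platform_revenue (h v : ℝ) (hh : 1 ≤ h) (hv : v ∈ Set.Icc 1 h) :
    1 * (1 / (1 + Real.log h)) +
      ∫ p in (1:ℝ)..v, p * (1 / (p * (1 + Real.log h))) = v / (1 + Real.log h) := by
  obtain ⟨hv1, hvh⟩ := hv
  have hcongr : (∫ p in (1:ℝ)..v, p * (1 / (p * (1 + Real.log h))))
      = ∫ p in (1:ℝ)..v, (1 / (1 + Real.log h)) := by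
    apply intervalIntegral.integral_congr
    intro p hp
    rw [Set.uIcc_of_le hv1] at hp
    have hp0 : p ≠ 0 := by nlinarith [hp.1]
    simp only []
    rw [mul_one_div, div_mul_eq_div_div, div_self hp0]
  rw [hcongr, intervalIntegral.integral_const, smul_eq_mul]
  have hlog : 0 < 1 + Real.log h := by
    have := Real.log_nonneg hh; linarith
  field_simp
  ring
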